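/- Let x ∈ ℝ^m, y ∈ ℝ^n with x ↔ y (i.e., there exist p, q with x ⊗ 1_p = y ⊗ 1_q). Let s = gcd(m,n). Then there exists a unique z ∈ ℝ^s such that x = z ⊗ 1_{m/s} and y = z ⊗ 1_{n/s}. -/

import Mathlib

open scoped BigOperators

/-- `rep t x` is `x ⊗ 1_{t/m}`: each entry of `x ∈ ℝ^m` repeated `t/m` consecutive times. -/
noncomputable def rep (t : ℕ) {m : ℕ} (x : Fin m → ℝ) : Fin t → ℝ :=
  fun i => if h : i.1 / (t / m) < m then x ⟨i.1 / (t / m), h⟩ else 0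

/-- Cross-dimensional norm `‖x‖_V = sqrt((1/n) Σ xᵢ²)`. -/
noncomputable def vnorm {n : ℕ} (x : Fin n → ℝ) : ℝ :=
  Real.sqrt ((1 / (n : ℝ)) * ∑ i, x i ^ 2)

/-- Cross-dimensional inner product `⟨x,y⟩_V`. -/
noncomputable def vinner {m n : ℕ} (x : Fin m → ℝ) (y : Fin n → ℝ) : ℝ :=
  (1 / (Nat.lcm m n : ℝ)) * ∑ i, rep (Nat.lcm m n) x i * rep (Nat.lcm m n) y i

/-- Cross-dimensional distance `d_V(x,y) = ‖x ⊖ y‖_V`. -/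
noncomputable def dV {m n : ℕ} (x : Fin m → ℝ) (y : Fin n → ℝ) : ℝ :=
  vnorm (rep (Nat.lcm m n) x - rep (Nat.lcm m n) y)

/-- `onesRepMat m t` is `I_m ⊗ 1ᵀ_{t/m}` (an `m × t` matrix, for `m ∣ t`). -/
noncomputable def onesRepMat (m t : ℕ) : Matrix (Fin m) (Fin t) ℝ :=
  Matrix.of fun i j => if j.1 / (t / m) = i.1 then (1 : ℝ) else 0

/-- `PiMat n m` is the cross-dimensional projection matrix `Π^n_m : ℝ^n → ℝ^m`,
`Π^n_m = (m/t)(I_m ⊗ 1ᵀ_{t/m})(I_n ⊗ 1_{t/n})`, `t = lcm(m,n)`. -/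
noncomputable def PiMat (n m : ℕ) : Matrix (Fin m) (Fin n) ℝ :=
  ((m : ℝ) / (Nat.lcm m n : ℝ)) •
    (onesRepMat m (Nat.lcm m n) * (onesRepMat n (Nat.lcm m n)).transpose)

/-- `A ⊗ 1ᵀ_{t/n}` for `A ∈ M_{m×n}` (an `m × t` matrix). -/
noncomputable def repCols {m n : ℕ} (t : ℕ) (A : Matrix (Fin m) (Fin n) ℝ) :
    Matrix (Fin m) (Fin t) ℝ :=
  Matrix.of fun i j => if h : j.1 / (t / n) < n then A i ⟨j.1 / (t / n), h⟩ else 0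

/-- `B ⊗ 1_{t/p}` for `B ∈ M_{p×q}` (a `t × q` matrix). -/
noncomputable def repRows {p q : ℕ} (t : ℕ) (B : Matrix (Fin p) (Fin q) ℝ) :
    Matrix (Fin t) (Fin q) ℝ :=
  Matrix.of fun j l => if h : j.1 / (t / p) < p then B ⟨j.1 / (t / p), h⟩ l else 0

/-- Weighted dimension-keeping semi-tensor product
`A ⋉̄ B = (n/t)(A ⊗ 1ᵀ_{t/n})(B ⊗ 1_{t/p})`, `t = lcm(n,p)`. -/
noncomputable def dkstp {m n p q : ℕ} (A : Matrix (Fin m) (Fin n) ℝ)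
    (B : Matrix (Fin p) (Fin q) ℝ) : Matrix (Fin m) (Fin q) ℝ :=
  ((n : ℝ) / (Nat.lcm n p : ℝ)) • (repCols (Nat.lcm n p) A * repRows (Nat.lcm n p) B)

/-- Bridge matrix `Ψ_{n×p} = (n/t)(I_n ⊗ 1ᵀ_{t/n})(I_p ⊗ 1_{t/p})`, `t = lcm(n,p)`. -/
noncomputable def Psi (n p : ℕ) : Matrix (Fin n) (Fin p) ℝ :=
  ((n : ℝ) / (Nat.lcm n p : ℝ)) •
    (onesRepMat n (Nat.lcm n p) * (onesRepMat p (Nat.lcm n p)).transpose)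

lemma rep_apply' {m : ℕ} (t : ℕ) (x : Fin m → ℝ) (i : Fin t)
    (h : i.1 / (t / m) < m) : rep t x i = x ⟨i.1 / (t / m), h⟩ := dif_pos h


/-- If `x ↔ y` then there is a unique `z ∈ ℝ^{gcd(m,n)}` with
`x = z ⊗ 1_{m/s}` and `y = z ⊗ 1_{n/s}`. -/
theorem stmt5 (m n : ℕ) (hm : 0 < m) (hn : 0 < n) (x : Fin m → ℝ) (y : Fin n → ℝ)
    (hxy : ∃ p q : ℕ, 0 < p ∧ 0 < q ∧ ∃ h : m * p = n * q,
      rep (m * p) x = rep (n * q) y ∘ Fin.cast h) :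
    ∃! z : Fin (Nat.gcd m n) → ℝ, x = rep m z ∧ y = rep n z := by

  obtain ⟨p, q, hp, hq, hL, heq⟩ := hxy
  set s := Nat.gcd m n with hs
  have hs0 : 0 < s := Nat.gcd_pos_of_pos_left n hm
  set m' := m / s with hm'def
  set n' := n / s with hn'def
  have hm' : s * m' = m := Nat.mul_div_cancel' (Nat.gcd_dvd_left m n)
  have hn' : s * n' = n := Nat.mul_div_cancel' (Nat.gcd_dvd_right m n)
  have hm'0 : 0 < m' := Nat.div_pos (Nat.le_of_dvd hm (Nat.gcd_dvd_left m n)) hs0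
  have hn'0 : 0 < n' := Nat.div_pos (Nat.le_of_dvd hn (Nat.gcd_dvd_right m n)) hs0
  have hmn : m' * p = n' * q := by
    apply Nat.eq_of_mul_eq_mul_left hs0
    rw [← mul_assoc, ← mul_assoc, hm', hn', hL]
  -- pointwise equality from hxy
  have hmp : m * p / m = p := Nat.mul_div_cancel_left p hm
  have hnq : n * q / n = q := Nat.mul_div_cancel_left q hn
  have key : ∀ k (hk : k < m * p) (h1 : k / p < m) (h2 : k / q < n),
      x ⟨k / p, h1⟩ = y ⟨k / q, h2⟩ := by
    intro k hk h1 h2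
    have := congrFun heq ⟨k, hk⟩
    simp only [rep, Function.comp_apply, Fin.coe_cast, hmp, hnq] at this
    rwa [dif_pos h1, dif_pos h2] at this
  have xy : ∀ j (hj : j < m) (hi : j * p / q < n), x ⟨j, hj⟩ = y ⟨j * p / q, hi⟩ := by
    intro j hj hi
    have hk : j * p < m * p := (Nat.mul_lt_mul_right hp).mpr hj
    have h1 : j * p / p = j := Nat.mul_div_cancel j hp
    have := key (j * p) hk (by rw [h1]; exact hj) hi
    simpa only [h1] using this
  have yx : ∀ i (hi : i < n) (hj : i * q / p < m), y ⟨i, hi⟩ = x ⟨i * q / p, hj⟩ := by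
    intro i hi hj
    have hk : i * q < m * p := by rw [hL]; exact (Nat.mul_lt_mul_right hq).mpr hi
    have h2 : i * q / q = i := Nat.mul_div_cancel i hq
    have := key (i * q) hk hj (by rw [h2]; exact hi)
    simp only [h2] at this
    exact this.symm
  -- coprimality: q ∣ j * p → m' ∣ j
  have hcop : ∀ j, q ∣ j * p → m' ∣ j := by
    intro j hqd
    set d := Nat.gcd p q with hd
    have hd0 : 0 < d := Nat.gcd_pos_of_pos_left q hp
    set p₀ := p / d with hp₀def
    set q₀ := q / d with hq₀def
    have hpd : p₀ * d = p := Nat.div_mul_cancel (Nat.gcd_dvd_left p q)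
    have hqd' : q₀ * d = q := Nat.div_mul_cancel (Nat.gcd_dvd_right p q)
    have cop : Nat.Coprime p₀ q₀ := Nat.coprime_div_gcd_div_gcd hd0
    have h1 : q₀ ∣ j * p₀ := by
      apply (mul_dvd_mul_iff_right hd0.ne').mp
      rw [hqd', mul_assoc, hpd]; exact hqd
    have h2 : q₀ ∣ j := cop.symm.dvd_of_dvd_mul_right h1
    have hmq : m' * p₀ = n' * q₀ := by
      apply Nat.eq_of_mul_eq_mul_right hd0
      rw [mul_assoc, mul_assoc, hpd, hqd']; exact hmn
    have copmn : Nat.Coprime m' n' := Nat.coprime_div_gcd_div_gcd hs0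
    have hq₀m : q₀ = m' := by
      apply Nat.dvd_antisymm
      · exact cop.symm.dvd_of_dvd_mul_right ⟨n', by rw [hmq, mul_comm]⟩
      · exact copmn.dvd_of_dvd_mul_left ⟨p₀, hmq.symm⟩
    exact hq₀m ▸ h2
  -- block constancy
  have block : ∀ j, ∀ (hj : j < m) (hb : j / m' * m' < m),
      x ⟨j, hj⟩ = x ⟨j / m' * m', hb⟩ := by
    intro j
    induction j using Nat.strong_induction_on with
    | _ j IH =>
      intro hj hb
      by_cases hd : m' ∣ j
      · exact congrArg x (Fin.ext (Nat.div_mul_cancel hd).symm)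
      · have hqnd : ¬ q ∣ j * p := fun h => hd (hcop j h)
        set i := j * p / q with hidef
        set j' := i * q / p with hj'def
        have hiq : i * q < j * p := by
          rcases lt_or_eq_of_le (Nat.div_mul_le_self (j * p) q) with h | h
          · exact h
          · exact absurd (Dvd.intro_left _ h) hqnd
        have hj'j : j' < j := (Nat.div_lt_iff_lt_mul hp).mpr hiq
        have hi : i < n := (Nat.div_lt_iff_lt_mul hq).mpr
          (by rw [← hL]; exact (Nat.mul_lt_mul_right hp).mpr hj)
        have hj' : j' < m := lt_trans hj'j hj
        have hb' : j' / m' * m' < m :=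
          lt_of_le_of_lt (Nat.div_mul_le_self j' m') hj'
        -- same block
        have hblock : j' / m' = j / m' := by
          set b := j / m' with hbdef
          have le1 : b * m' ≤ j := Nat.div_mul_le_self j m'
          have step1 : b * n' ≤ i := by
            rw [Nat.le_div_iff_mul_le hq, mul_assoc, ← hmn, ← mul_assoc]
            exact Nat.mul_le_mul_right p le1
          have step2 : b * m' ≤ j' := by
            rw [Nat.le_div_iff_mul_le hp, mul_assoc, hmn, ← mul_assoc]
            exact Nat.mul_le_mul_right q step1
          exact le_antisymm (Nat.div_le_div_right hj'j.le)
            ((Nat.le_div_iff_mul_le hm'0).mpr step2)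
        calc x ⟨j, hj⟩ = y ⟨i, hi⟩ := xy j hj hi
          _ = x ⟨j', hj'⟩ := yx i hi hj'
          _ = x ⟨j' / m' * m', hb'⟩ := IH j' hj'j hj' hb'
          _ = x ⟨j / m' * m', hb⟩ := congrArg x (Fin.ext (show j' / m' * m' = j / m' * m' by rw [hblock]))
  -- the witness
  have hzb : ∀ k : Fin s, k.1 * m' < m := fun k => by
    calc k.1 * m' < s * m' := (Nat.mul_lt_mul_right hm'0).mpr k.isLt
      _ = m := hm'
  refine ⟨fun k => x ⟨k.1 * m', hzb k⟩, ⟨?_, ?_⟩, ?_⟩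
  · -- x = rep m z
    funext j
    have hdiv : j.1 / m' < s := (Nat.div_lt_iff_lt_mul hm'0).mpr (lt_of_lt_of_eq j.isLt hm'.symm)
    rw [rep_apply' m _ j hdiv]
    exact block j.1 j.isLt (hzb ⟨j.1 / (m / s), hdiv⟩)
  · -- y = rep n z
    funext i
    have hdiv : i.1 / n' < s := (Nat.div_lt_iff_lt_mul hn'0).mpr (lt_of_lt_of_eq i.isLt hn'.symm)
    rw [rep_apply' n _ i hdiv]
    have hj : i.1 * q / p < m := (Nat.div_lt_iff_lt_mul hp).mpr
      (by rw [hL]; exact (Nat.mul_lt_mul_right hq).mpr i.isLt)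
    have h1 : y i = x ⟨i.1 * q / p, hj⟩ := by
      have := yx i.1 i.isLt hj
      rwa [show (⟨i.1, i.isLt⟩ : Fin n) = i from Fin.ext rfl] at this
    rw [h1, block (i.1 * q / p) hj (lt_of_le_of_lt (Nat.div_mul_le_self _ m') hj)]
    -- now show the blocks match
    have hdivEq : i.1 * q / p / m' = i.1 / n' := by
      set b := i.1 / n' with hbdef
      have le1 : b * n' ≤ i.1 := Nat.div_mul_le_self i.1 n'
      have lo : b * m' ≤ i.1 * q / p := by
        rw [Nat.le_div_iff_mul_le hp, mul_assoc, hmn, ← mul_assoc]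
        exact Nat.mul_le_mul_right q le1
      have hiub : i.1 < (b + 1) * n' := (Nat.div_lt_iff_lt_mul hn'0).mp (Nat.lt_succ_self b)
      have hi2 : i.1 * q < (b + 1) * m' * p := by
        rw [mul_assoc, hmn, ← mul_assoc]
        exact (Nat.mul_lt_mul_right hq).mpr hiub
      have hub : i.1 * q / p < (b + 1) * m' := (Nat.div_lt_iff_lt_mul hp).mpr hi2
      exact le_antisymm (Nat.lt_succ_iff.mp ((Nat.div_lt_iff_lt_mul hm'0).mpr hub))
        ((Nat.le_div_iff_mul_le hm'0).mpr lo)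
    exact congrArg x (Fin.ext (by simp [hdivEq]; exact Or.inl rfl))
  · -- uniqueness
    intro z' ⟨hx', hy'⟩
    funext k
    have hc : k.1 * m' / m' = k.1 := Nat.mul_div_cancel k.1 hm'0
    have hcond : k.1 * m' / m' < s := by rw [hc]; exact k.isLt
    have := rep_apply' m z' ⟨k.1 * m', hzb k⟩ hcond
    rw [← hx'] at this
    rw [show z' k = z' ⟨k.1 * m' / m', hcond⟩ from congrArg z' (Fin.ext hc.symm), ← this]
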